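/- Let x_1, ..., x_n, y be integers with x_i < y for all i, u = [x_1,...,x_n], and for 1 ≤ i ≤ n+1 let v_i = [x_1,...,x_{i-1}, y, x_i,...,x_n] be the sequence obtained by inserting y in position i. Then Σ_{i=1}^{n+1} q^{rmaj(v_i)} = q^{rmaj(u)} (1 + q + ... + q^n), where for a sequence of length m, rmaj = Σ_{i ∈ Des} (m - i) and Des is the set of positions i with the i-th entry greater than the (i+1)-st. -/
import Mathlib


open scoped Classical
open Finset

noncomputable section

/-- `sgen n i` is the adjacent transposition `s_i = (i, i+1)` (1-indexed) in `S_n`,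
realized as a permutation of `Fin n` (positions `1,…,n` correspond to `0,…,n-1`). -/
def sgen (n i : ℕ) : Equiv.Perm (Fin n) :=
  if h : 1 ≤ i ∧ i < n then Equiv.swap ⟨i - 1, by omega⟩ ⟨i, h.2⟩ else 1

/-- `agen n i` is the generator `a_i = s_1 s_{i+1}` of the alternating group. -/
def agen (n i : ℕ) : Equiv.Perm (Fin n) := sgen n 1 * sgen n (i + 1)

/-- The descending product `s_j s_{j-1} ⋯ s_k` (equal to `1` when `k = j+1`). -/
def dProd (n j k : ℕ) : Equiv.Perm (Fin n) :=
  ((List.range (j + 1 - k)).map fun t => sgen n (j - t)).prod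

/-- The descending product `a_j a_{j-1} ⋯ a_k` (equal to `1` when `k = j+1`). -/
def aDProd (n j k : ℕ) : Equiv.Perm (Fin n) :=
  ((List.range (j + 1 - k)).map fun t => agen n (j - t)).prod

/-- `R^S_j = {1, s_j, s_j s_{j-1}, …, s_j s_{j-1} ⋯ s_1}`. -/
def RS (n j : ℕ) : Set (Equiv.Perm (Fin n)) :=
  { w | ∃ k, 1 ≤ k ∧ k ≤ j + 1 ∧ w = dProd n j k }

/-- `R^S_j` as a finite set. -/
def RSfin (n j : ℕ) : Finset (Equiv.Perm (Fin n)) :=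
  (Finset.range (j + 1)).image fun k => dProd n j (k + 1)

/-- `R^A_j = {1, a_j, a_j a_{j-1}, …, a_j ⋯ a_2, a_j ⋯ a_2 a_1, a_j ⋯ a_2 a_1⁻¹}`. -/
def RA (n j : ℕ) : Set (Equiv.Perm (Fin n)) :=
  { v | (∃ k, 1 ≤ k ∧ k ≤ j + 1 ∧ v = aDProd n j k) ∨ v = aDProd n j 2 * (agen n 1)⁻¹ }

/-- The element of `R^A_j` with code `k`:
`k = 0` encodes `a_j ⋯ a_2 a_1⁻¹`, and `k ≥ 1` encodes `a_j ⋯ a_k`. -/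
def elemA (n j k : ℕ) : Equiv.Perm (Fin n) :=
  if k = 0 then aDProd n j 2 * (agen n 1)⁻¹ else aDProd n j k

/-- `k : Fin (n-1) → ℕ` codes the S-canonical presentation of `w`:
the `j`-th factor is `s_{j+1} s_j ⋯ s_{k j} ∈ R^S_{j+1}` (`k j = j + 2` codes `1`). -/
def isCanonS (n : ℕ) (w : Equiv.Perm (Fin n)) (k : Fin (n - 1) → ℕ) : Prop :=
  (∀ j : Fin (n - 1), 1 ≤ k j ∧ k j ≤ (j : ℕ) + 2) ∧
    (List.ofFn fun j : Fin (n - 1) => dProd n ((j : ℕ) + 1) (k j)).prod = w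

/-- The code of the S-canonical presentation of `w` (it is unique when it exists). -/
def kvecS (n : ℕ) (w : Equiv.Perm (Fin n)) : Fin (n - 1) → ℕ :=
  if h : ∃ k, isCanonS n w k then h.choose else fun _ => 0

/-- `del_S w` : the number of occurrences of `s_1` in the S-canonical presentation of `w`
(the factor from `R^S_{j+1}` contains `s_1` exactly when its code is `1`). -/
def delS (n : ℕ) (w : Equiv.Perm (Fin n)) : ℕ :=
  (Finset.univ.filter fun j : Fin (n - 1) => kvecS n w j = 1).card

/-- `k : Fin (m-2) → ℕ` codes the A-canonical presentation of `v ∈ A_m`: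
the `j`-th factor is `elemA m (j+1) (k j) ∈ R^A_{j+1}`. -/
def isCanonA (m : ℕ) (v : Equiv.Perm (Fin m)) (k : Fin (m - 2) → ℕ) : Prop :=
  (∀ j : Fin (m - 2), k j ≤ (j : ℕ) + 2) ∧
    (List.ofFn fun j : Fin (m - 2) => elemA m ((j : ℕ) + 1) (k j)).prod = v

/-- The code of the A-canonical presentation of `v`. -/
def kvecA (m : ℕ) (v : Equiv.Perm (Fin m)) : Fin (m - 2) → ℕ :=
  if h : ∃ k, isCanonA m v k then h.choose else fun _ => 0

/-- `del_A v` : the number of occurrences of `a_1^{±1}` in the A-canonical presentation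
(codes `0` and `1` are the two factors containing `a_1^{±1}`). -/
def delA (m : ℕ) (v : Equiv.Perm (Fin m)) : ℕ :=
  (Finset.univ.filter fun j : Fin (m - 2) => kvecA m v j ≤ 1).card

/-- `ℓ_A v` : the total number of letters `a_i^{±1}` in the A-canonical presentation:
the factor of `R^A_{j+1}` with code `0` has `j+1` letters, the one with code `k ≥ 1`
has `j + 2 - k` letters. -/
def lenA (m : ℕ) (v : Equiv.Perm (Fin m)) : ℕ :=
  ∑ j : Fin (m - 2), if kvecA m v j = 0 then (j : ℕ) + 1 else (j : ℕ) + 2 - kvecA m v j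

/-- `ℓ_S w` : the number of inversions of `w`. -/
def invS {n : ℕ} (w : Equiv.Perm (Fin n)) : ℕ :=
  (Finset.univ.filter fun p : Fin n × Fin n => p.1 < p.2 ∧ w p.2 < w p.1).card

/-- The (1-indexed) descent set `Des_S(σ) = {1 ≤ i ≤ n-1 : σ(i) > σ(i+1)}`. -/
def Des1 {n : ℕ} (σ : Equiv.Perm (Fin n)) : Finset ℕ :=
  (Finset.Ico 1 n).filter fun i => ∃ h : i < n, σ ⟨i, h⟩ < σ ⟨i - 1, by omega⟩

/-- `rmaj_{S_m}(σ) = ∑_{i ∈ Des_S(σ)} (m - i)`. -/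
def rmaj1 {n : ℕ} (m : ℕ) (σ : Equiv.Perm (Fin n)) : ℕ := ∑ i ∈ Des1 σ, (m - i)

/-- `maj_S(σ) = ∑_{i ∈ Des_S(σ)} i`. -/
def maj1 {n : ℕ} (σ : Equiv.Perm (Fin n)) : ℕ := ∑ i ∈ Des1 σ, i

/-- `Del_S(σ)` : the (1-indexed) positions `1 < i ≤ n` which are left-to-right minima:
`σ(i) < σ(j)` for all `j < i`. -/
def DelSet {n : ℕ} (σ : Equiv.Perm (Fin n)) : Finset ℕ :=
  (Finset.Icc 2 n).filter fun i =>
    ∃ h : i - 1 < n, ∀ j : Fin n, (j : ℕ) < i - 1 → σ ⟨i - 1, h⟩ < σ j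

/-- `del_S(σ)` computed combinatorially: the number of left-to-right minima of `σ`
other than the first position. -/
def delC {n : ℕ} (σ : Equiv.Perm (Fin n)) : ℕ := (DelSet σ).card

/-- The Gaussian (q-)binomial coefficient, via the q-Pascal recursion. -/
def qbinom {R : Type*} [CommRing R] (q : R) : ℕ → ℕ → R
  | _, 0 => 1
  | 0, _ + 1 => 0
  | n + 1, k + 1 => qbinom q n k + q ^ (k + 1) * qbinom q n (k + 1)

end

/-- The 1-indexed descent set of a sequence of integers. -/
def Des1Seq {m : ℕ} (f : Fin m → ℤ) : Finset ℕ :=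
  (Finset.Ico 1 m).filter fun i => ∃ h : i < m, f ⟨i, h⟩ < f ⟨i - 1, by omega⟩

/-- The reverse major index `rmaj(f) = ∑_{i ∈ Des(f)} (m - i)` of a length-`m` sequence. -/
noncomputable def rmajSeq {m : ℕ} (f : Fin m → ℤ) : ℕ := ∑ i ∈ Des1Seq f, (m - i)

lemma insertNth_val_lt {n : ℕ} (x : Fin n → ℤ) (y : ℤ) (i : Fin (n+1)) (k : ℕ)
    (hk : k < n+1) (h : k < (i:ℕ)) :
    (Fin.insertNth i y x : Fin (n+1) → ℤ) ⟨k, hk⟩ = x ⟨k, by have := i.isLt; omega⟩ := by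
  have hkn : k < n := by have := i.isLt; omega
  have heq : (⟨k, hk⟩ : Fin (n+1)) = i.succAbove ⟨k, hkn⟩ := by
    rw [Fin.succAbove_of_castSucc_lt]
    · rfl
    · simp [Fin.lt_iff_val_lt_val, h]
  rw [heq, Fin.insertNth_apply_succAbove]

lemma insertNth_val_eq {n : ℕ} (x : Fin n → ℤ) (y : ℤ) (i : Fin (n+1)) (k : ℕ)
    (hk : k < n+1) (h : k = (i:ℕ)) :
    (Fin.insertNth i y x : Fin (n+1) → ℤ) ⟨k, hk⟩ = y := by
  have heq : (⟨k, hk⟩ : Fin (n+1)) = i := by ext; simp [h]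
  rw [heq, Fin.insertNth_apply_same]

lemma insertNth_val_gt {n : ℕ} (x : Fin n → ℤ) (y : ℤ) (i : Fin (n+1)) (k : ℕ)
    (hk : k < n+1) (h : (i:ℕ) < k) :
    (Fin.insertNth i y x : Fin (n+1) → ℤ) ⟨k, hk⟩ = x ⟨k - 1, by omega⟩ := by
  have hk1 : k - 1 < n := by omega
  have heq : (⟨k, hk⟩ : Fin (n+1)) = i.succAbove ⟨k-1, hk1⟩ := by
    rw [Fin.succAbove_of_le_castSucc]
    · ext; simp; omega
    · simp [Fin.le_iff_val_le_val]; omega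
  rw [heq, Fin.insertNth_apply_succAbove]

lemma mem_DesMemChar {m : ℕ} (f : Fin m → ℤ) (p : ℕ) :
    p ∈ Des1Seq f ↔ (1 ≤ p ∧ p < m) ∧ ∃ h : p < m, f ⟨p, h⟩ < f ⟨p - 1, by omega⟩ := by
  simp [Des1Seq, Finset.mem_filter, Finset.mem_Ico]

lemma mem_Des_insert {n : ℕ} (x : Fin n → ℤ) (y : ℤ) (hxy : ∀ i, x i < y)
    (i : Fin (n+1)) (p : ℕ) :
    p ∈ Des1Seq (Fin.insertNth i y x : Fin (n+1) → ℤ) ↔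
      (p < (i:ℕ) ∧ p ∈ Des1Seq x) ∨ (p = (i:ℕ)+1 ∧ p ≤ n) ∨
        ((i:ℕ)+1 < p ∧ p ≤ n ∧ p - 1 ∈ Des1Seq x) := by
  have hi := i.isLt
  simp only [mem_DesMemChar]
  constructor
  · rintro ⟨⟨h1, h2⟩, hlt, hd⟩
    rcases lt_trichotomy p (i:ℕ) with h | h | h
    · left
      refine ⟨h, ⟨h1, by omega⟩, by omega, ?_⟩
      rwa [insertNth_val_lt x y i p hlt h,
        insertNth_val_lt x y i (p-1) (by omega) (by omega)] at hd
    · exfalso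
      rw [insertNth_val_eq x y i p hlt h,
        insertNth_val_lt x y i (p-1) (by omega) (by omega)] at hd
      exact absurd hd (not_lt.2 (hxy _).le)
    · rcases eq_or_lt_of_le (Nat.succ_le_of_lt h) with h' | h'
      · exact Or.inr (Or.inl ⟨h'.symm, by omega⟩)
      · refine Or.inr (Or.inr ⟨h', by omega, ⟨by omega, by omega⟩, by omega, ?_⟩)
        rwa [insertNth_val_gt x y i p hlt h,
          insertNth_val_gt x y i (p-1) (by omega) (by omega)] at hd
  · rintro (⟨h, ⟨h1, h2⟩, hh, hd⟩ | ⟨hpe, hp⟩ | ⟨h, hp, ⟨h1, h2⟩, hh, hd⟩)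
    · refine ⟨⟨h1, by omega⟩, by omega, ?_⟩
      rw [insertNth_val_lt x y i p (by omega) h,
        insertNth_val_lt x y i (p-1) (by omega) (by omega)]
      exact hd
    · refine ⟨⟨by omega, by omega⟩, by omega, ?_⟩
      rw [insertNth_val_gt x y i p (by omega) (by omega),
        insertNth_val_eq x y i (p-1) (by omega) (by omega)]
      exact hxy _
    · refine ⟨⟨by omega, by omega⟩, by omega, ?_⟩
      rw [insertNth_val_gt x y i p (by omega) (by omega),
        insertNth_val_gt x y i (p-1) (by omega) (by omega)]
      exact hd

open Finset in
lemma Des_insert {n : ℕ} (x : Fin n → ℤ) (y : ℤ) (hxy : ∀ i, x i < y) (i : Fin (n+1)) :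
    Des1Seq (Fin.insertNth i y x : Fin (n+1) → ℤ) =
      (((Des1Seq x).filter (· < (i:ℕ)) ∪
        ((Des1Seq x).filter (fun p => (i:ℕ) < p)).image (· + 1)) ∪
       (if (i:ℕ) < n then {(i:ℕ)+1} else ∅)) := by
  have hi := i.isLt
  have hD : ∀ r ∈ Des1Seq x, 1 ≤ r ∧ r < n := fun r hr => ((mem_DesMemChar x r).1 hr).1
  ext p
  rw [mem_Des_insert x y hxy i p]
  simp only [Finset.mem_union, Finset.mem_filter, Finset.mem_image]
  constructor
  · rintro (⟨h, hp⟩ | ⟨rfl, hp⟩ | ⟨h, hp, hp1⟩)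
    · exact Or.inl (Or.inl ⟨hp, h⟩)
    · right
      rw [if_pos (show (i:ℕ) < n by omega)]
      simp
    · refine Or.inl (Or.inr ⟨p - 1, ⟨hp1, by omega⟩, by omega⟩)
  · rintro ((⟨hp, h⟩ | ⟨a, ⟨ha, hia⟩, rfl⟩) | hp)
    · exact Or.inl ⟨h, hp⟩
    · have := hD a ha
      refine Or.inr (Or.inr ⟨by omega, by omega, by simpa using ha⟩)
    · by_cases hin : (i:ℕ) < n
      · rw [if_pos hin] at hp
        simp at hp
        exact Or.inr (Or.inl ⟨hp, by omega⟩)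
      · rw [if_neg hin] at hp
        simp at hp

open Finset in
lemma rmaj_insert_aux {n : ℕ} (x : Fin n → ℤ) (y : ℤ) (hxy : ∀ i, x i < y) (i : Fin (n+1)) :
    (∑ p ∈ Des1Seq (Fin.insertNth i y x : Fin (n+1) → ℤ), (n + 1 - p)) =
      (∑ p ∈ Des1Seq x, (n - p)) +
        (((Des1Seq x).filter (· < (i:ℕ))).card +
          (if (i:ℕ) ∈ Des1Seq x then 0 else n - (i:ℕ))) := by
  have hi := i.isLt
  have hD : ∀ r ∈ Des1Seq x, 1 ≤ r ∧ r < n := fun r hr => ((mem_DesMemChar x r).1 hr).1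
  set D := Des1Seq x with hDdef
  set A := D.filter (· < (i:ℕ)) with hA
  set B' := D.filter (fun p => (i:ℕ) < p) with hB'
  set C : Finset ℕ := (if (i:ℕ) < n then {(i:ℕ)+1} else ∅) with hC
  rw [Des_insert x y hxy i]
  have hAB : Disjoint A (B'.image (· + 1)) := by
    rw [Finset.disjoint_left]
    rintro a ha hb
    rw [hA, Finset.mem_filter] at ha
    rw [Finset.mem_image] at hb
    obtain ⟨b, hb, rfl⟩ := hb
    rw [hB', Finset.mem_filter] at hb
    omega
  have hABC : Disjoint (A ∪ B'.image (· + 1)) C := by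
    rw [Finset.disjoint_left]
    rintro a ha hc
    rw [hC] at hc
    by_cases hin : (i:ℕ) < n
    · rw [if_pos hin, Finset.mem_singleton] at hc
      subst hc
      rcases Finset.mem_union.1 ha with h | h
      · rw [hA, Finset.mem_filter] at h; omega
      · rw [Finset.mem_image] at h
        obtain ⟨b, hb, hbe⟩ := h
        rw [hB', Finset.mem_filter] at hb
        omega
    · rw [if_neg hin] at hc; simp at hc
  rw [Finset.sum_union hABC, Finset.sum_union hAB]
  have hsumA : ∑ p ∈ A, (n + 1 - p) = (∑ p ∈ A, (n - p)) + A.card := by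
    have hcong : ∀ p ∈ A, n + 1 - p = (n - p) + 1 := fun p hp => by
      rw [hA, Finset.mem_filter] at hp; have := hD p hp.1; omega
    rw [Finset.sum_congr rfl hcong, Finset.sum_add_distrib, Finset.sum_const, smul_eq_mul,
      mul_one]
  have hsumB : ∑ p ∈ B'.image (· + 1), (n + 1 - p) = ∑ p ∈ B', (n - p) := by
    rw [Finset.sum_image (fun a _ b _ h => by omega)]
    refine Finset.sum_congr rfl fun p hp => by omega
  have hsumC : ∑ p ∈ C, (n + 1 - p) = n - (i:ℕ) := by
    rw [hC]
    by_cases hin : (i:ℕ) < n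
    · rw [if_pos hin, Finset.sum_singleton]; omega
    · rw [if_neg hin, Finset.sum_empty]; omega
  rw [hsumA, hsumB, hsumC]
  have hsplit1 : ∑ p ∈ D, (n - p) =
      (∑ p ∈ A, (n - p)) + ∑ p ∈ D.filter (fun p => ¬ p < (i:ℕ)), (n - p) := by
    rw [hA, Finset.sum_filter_add_sum_filter_not]
  have hsplit2 : ∑ p ∈ D.filter (fun p => ¬ p < (i:ℕ)), (n - p) =
      (if (i:ℕ) ∈ D then n - (i:ℕ) else 0) + ∑ p ∈ B', (n - p) := by
    have h1 : D.filter (fun p => ¬ p < (i:ℕ)) =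
        (D.filter (fun p => p = (i:ℕ))) ∪ B' := by
      ext p
      rw [hB']
      simp only [Finset.mem_union, Finset.mem_filter]
      constructor
      · rintro ⟨hp, h⟩
        rcases eq_or_lt_of_le (Nat.le_of_not_lt h) with h' | h'
        · exact Or.inl ⟨hp, h'.symm⟩
        · exact Or.inr ⟨hp, h'⟩
      · rintro (⟨hp, h⟩ | ⟨hp, h⟩) <;> exact ⟨hp, by omega⟩
    have h2 : Disjoint (D.filter (fun p => p = (i:ℕ))) B' := by
      rw [Finset.disjoint_left]
      rintro a ha hb
      rw [Finset.mem_filter] at ha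
      rw [hB', Finset.mem_filter] at hb
      omega
    rw [h1, Finset.sum_union h2]
    congr 1
    by_cases hin : (i:ℕ) ∈ D
    · rw [if_pos hin]
      have : D.filter (fun p => p = (i:ℕ)) = {(i:ℕ)} := by
        ext p; simp only [Finset.mem_filter, Finset.mem_singleton]
        constructor
        · rintro ⟨_, rfl⟩; rfl
        · rintro rfl; exact ⟨hin, rfl⟩
      rw [this, Finset.sum_singleton]
    · rw [if_neg hin]
      have : D.filter (fun p => p = (i:ℕ)) = ∅ := by
        ext p; simp only [Finset.mem_filter, Finset.mem_singleton]
        constructor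
        · rintro ⟨hp, rfl⟩; exact absurd hp hin
        · intro h; simp at h
      rw [this, Finset.sum_empty]
  rw [hsplit1, hsplit2]
  by_cases hin : (i:ℕ) ∈ D
  · have := hD _ hin
    rw [if_pos hin, if_pos hin]
    omega
  · rw [if_neg hin, if_neg hin]
    omega

open Finset in
lemma sum_pow_c {n : ℕ} (D : Finset ℕ) (hD : ∀ r ∈ D, 1 ≤ r ∧ r < n)
    {R : Type*} [CommRing R] (q : R) :
    ∑ i : Fin (n+1),
        q ^ ((D.filter (· < (i:ℕ))).card + (if (i:ℕ) ∈ D then 0 else n - (i:ℕ))) =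
      ∑ k ∈ Finset.range (n+1), q ^ k := by
  classical
  set f : ℕ → ℕ := fun a => (D.filter (· < a)).card with hf
  set c : ℕ → ℕ := fun a => f a + (if a ∈ D then 0 else n - a) with hc
  have hfle : ∀ a, f a ≤ a := by
    intro a
    calc f a ≤ (Finset.range a).card :=
          Finset.card_le_card (fun r hr => Finset.mem_range.2 (Finset.mem_filter.1 hr).2)
      _ = a := Finset.card_range a
  have hflb : ∀ a b, a < b → a ∈ D → f a + 1 ≤ f b := by
    intro a b hab ha
    have hsub : insert a (D.filter (· < a)) ⊆ D.filter (· < b) := by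
      intro r hr
      rcases Finset.mem_insert.1 hr with rfl | hr
      · exact Finset.mem_filter.2 ⟨ha, hab⟩
      · obtain ⟨h1, h2⟩ := Finset.mem_filter.1 hr
        exact Finset.mem_filter.2 ⟨h1, by omega⟩
    have := Finset.card_le_card hsub
    rwa [Finset.card_insert_of_notMem (fun h => by
      exact absurd (Finset.mem_filter.1 h).2 (lt_irrefl a))] at this
  have hfub : ∀ a b, a < b → a ∉ D → f b ≤ f a + (b - a - 1) := by
    intro a b hab ha
    have hsub : D.filter (· < b) ⊆ (D.filter (· < a)) ∪ Finset.Ioo a b := by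
      intro r hr
      obtain ⟨h1, h2⟩ := Finset.mem_filter.1 hr
      rcases lt_trichotomy r a with h | h | h
      · exact Finset.mem_union_left _ (Finset.mem_filter.2 ⟨h1, h⟩)
      · exact absurd (h ▸ h1) ha
      · exact Finset.mem_union_right _ (Finset.mem_Ioo.2 ⟨h, h2⟩)
    calc f b ≤ ((D.filter (· < a)) ∪ Finset.Ioo a b).card := Finset.card_le_card hsub
      _ ≤ f a + (Finset.Ioo a b).card := Finset.card_union_le _ _
      _ = f a + (b - a - 1) := by rw [Nat.card_Ioo]
  have hcle : ∀ a, a ≤ n → c a ≤ n := by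
    intro a ha
    rw [hc]
    by_cases h : a ∈ D
    · simp only [if_pos h]
      have := hfle a; omega
    · simp only [if_neg h]
      have := hfle a; omega
  have hinj : ∀ a b, a ≤ n → b ≤ n → a < b → c a ≠ c b := by
    intro a b han hbn hab
    have hbd : b ∈ D → b < n := fun h => (hD b h).2
    by_cases hda : a ∈ D <;> by_cases hdb : b ∈ D
    · have h1 := hflb a b hab hda
      simp only [hc, if_pos hda, if_pos hdb]
      omega
    · have h1 := hflb a b hab hda
      simp only [hc, if_pos hda, if_neg hdb]
      omega
    · have h2 := hfub a b hab hda
      have h3 := hbd hdb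
      simp only [hc, if_neg hda, if_pos hdb]
      omega
    · have h2 := hfub a b hab hda
      simp only [hc, if_neg hda, if_neg hdb]
      omega
  have hinjOn : ∀ i : Fin (n+1), ∀ j : Fin (n+1), c (i:ℕ) = c (j:ℕ) → i = j := by
    intro i j h
    by_contra hne
    have hne' : (i:ℕ) ≠ (j:ℕ) := fun h' => hne (Fin.ext h')
    rcases lt_or_gt_of_ne hne' with h' | h'
    · exact hinj _ _ (by omega) (by omega) h' h
    · exact hinj _ _ (by omega) (by omega) h' h.symm
  have himg : (Finset.univ.image fun i : Fin (n+1) => c (i:ℕ)) = Finset.range (n+1) := by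
    apply Finset.eq_of_subset_of_card_le
    · intro k hk
      obtain ⟨i, _, rfl⟩ := Finset.mem_image.1 hk
      exact Finset.mem_range.2 (by have := hcle (i:ℕ) (by omega); omega)
    · rw [Finset.card_range,
        Finset.card_image_of_injOn (fun i _ j _ h => hinjOn i j h), Finset.card_univ,
        Fintype.card_fin]
  calc ∑ i : Fin (n+1), q ^ c (i:ℕ)
      = ∑ k ∈ Finset.univ.image (fun i : Fin (n+1) => c (i:ℕ)), q ^ k :=
        (Finset.sum_image (fun i _ j _ h => hinjOn i j h)).symm
    _ = ∑ k ∈ Finset.range (n+1), q ^ k := by rw [himg]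

/-- Inserting a maximal letter `y` in all `n+1` positions of `u = [x_1,…,x_n]`:
`∑_{i=1}^{n+1} q^{rmaj(v_i)} = q^{rmaj(u)} (1 + q + ⋯ + q^n)`. -/
theorem stmt14 (n : ℕ) (x : Fin n → ℤ) (y : ℤ) (hxy : ∀ i, x i < y)
    (R : Type*) [CommRing R] (q : R) :
    ∑ i : Fin (n + 1), q ^ rmajSeq (Fin.insertNth i y x) =
      q ^ rmajSeq x * ∑ i ∈ Finset.range (n + 1), q ^ i := by
  classical
  have hD : ∀ r ∈ Des1Seq x, 1 ≤ r ∧ r < n := fun r hr => ((mem_DesMemChar x r).1 hr).1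
  have key : ∀ i : Fin (n+1), rmajSeq (Fin.insertNth i y x : Fin (n+1) → ℤ) =
      rmajSeq x + (((Des1Seq x).filter (· < (i:ℕ))).card +
        (if (i:ℕ) ∈ Des1Seq x then 0 else n - (i:ℕ))) := by
    intro i
    have := rmaj_insert_aux x y hxy i
    simpa [rmajSeq] using this
  calc ∑ i : Fin (n + 1), q ^ rmajSeq (Fin.insertNth i y x)
      = ∑ i : Fin (n + 1), q ^ rmajSeq x *
          q ^ (((Des1Seq x).filter (· < (i:ℕ))).card +
            (if (i:ℕ) ∈ Des1Seq x then 0 else n - (i:ℕ))) := by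
        refine Finset.sum_congr rfl fun i _ => ?_
        rw [key i, pow_add]
    _ = q ^ rmajSeq x * ∑ i : Fin (n + 1),
          q ^ (((Des1Seq x).filter (· < (i:ℕ))).card +
            (if (i:ℕ) ∈ Des1Seq x then 0 else n - (i:ℕ))) := by
        rw [Finset.mul_sum]
    _ = q ^ rmajSeq x * ∑ i ∈ Finset.range (n + 1), q ^ i := by
        rw [sum_pow_c (Des1Seq x) hD q]
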